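/- arXiv:2403.18429 — 3 statements merged into one kernel-verified Lean document; each statement's English description precedes it below -/
import Mathlib

section
/- There exists a finite simple connected graph G with at least two vertices such that μ(G) > max over all vertices v of G of √(4·m_v³/d_v). (This disproves conjectured vertex-maximum bound 15 of Brankov, Hansen and Stevanović.) -/
noncomputable section

open Finset

/-- The degree of a vertex, as a real number. -/
def degR {V : Type*} [Fintype V] (G : SimpleGraph V) (v : V) : ℝ :=
  letI := Classical.decRel G.Adj
  (G.degree v : ℝ)

/-- The average degree of the neighbours of a vertex, as a real number:
`m_v = (∑_{u ~ v} d_u) / d_v`. -/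
def avgDegR {V : Type*} [Fintype V] (G : SimpleGraph V) (v : V) : ℝ :=
  letI := Classical.decRel G.Adj
  (∑ u ∈ G.neighborFinset v, (G.degree u : ℝ)) / (G.degree v : ℝ)

/-- The largest eigenvalue of the Laplacian matrix `L = D - A` of a finite graph. -/
def lapSpecRad {V : Type*} [Fintype V] [DecidableEq V] [Nonempty V]
    (G : SimpleGraph V) : ℝ :=
  letI := Classical.decRel G.Adj
  ⨆ i, (SimpleGraph.posSemidef_lapMatrix ℝ G).isHermitian.eigenvalues i

open Matrix in
/-- Rayleigh quotient lower bound for the supremum of eigenvalues. -/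
lemma rayleigh_le_iSup {n : Type*} [Fintype n] [DecidableEq n] [Nonempty n]
    {A : Matrix n n ℝ} (hA : A.IsHermitian) (x : n → ℝ) :
    x ⬝ᵥ A *ᵥ x ≤ (⨆ i, hA.eigenvalues i) * (x ⬝ᵥ x) := by
  have hbdd : BddAbove (Set.range hA.eigenvalues) := (Set.finite_range _).bddAbove
  set U : Matrix n n ℝ := (hA.eigenvectorUnitary : Matrix n n ℝ) with hUdef
  have hU1 : U * star U = 1 := Unitary.coe_mul_star_self _
  have hU2 : star U * U = 1 := Unitary.coe_star_mul_self _
  set y : n → ℝ := star U *ᵥ x with hy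
  have hxU : x ᵥ* U = y := by
    rw [hy, Matrix.star_eq_conjTranspose, Matrix.conjTranspose_eq_transpose_of_trivial,
      Matrix.mulVec_transpose]
  have hAx : A *ᵥ x = U *ᵥ (Matrix.diagonal hA.eigenvalues *ᵥ y) := by
    conv_lhs => rw [hA.spectral_theorem, Unitary.conjStarAlgAut_apply]
    rw [RCLike.ofReal_real_eq_id]
    rw [← Matrix.mulVec_mulVec, ← Matrix.mulVec_mulVec]
    simp [hy, Function.comp_def]
    rfl
  have hq : x ⬝ᵥ A *ᵥ x = ∑ i, hA.eigenvalues i * (y i) ^ 2 := by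
    rw [hAx, Matrix.dotProduct_mulVec, hxU]
    simp only [dotProduct, Matrix.mulVec_diagonal]
    exact Finset.sum_congr rfl fun i _ => by ring
  have hnorm : y ⬝ᵥ y = x ⬝ᵥ x := by
    rw [hy]
    rw [Matrix.dotProduct_mulVec]
    have : (star U *ᵥ x) ᵥ* star U = U *ᵥ (star U *ᵥ x) := by
      rw [Matrix.star_eq_conjTranspose, Matrix.conjTranspose_eq_transpose_of_trivial,
        ← Matrix.mulVec_transpose, Matrix.transpose_transpose]
    rw [this, Matrix.mulVec_mulVec, hU1, Matrix.one_mulVec]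
  have hsum : ∑ i, hA.eigenvalues i * (y i) ^ 2
      ≤ ∑ i, (⨆ j, hA.eigenvalues j) * (y i) ^ 2 := by
    refine Finset.sum_le_sum fun i _ => ?_
    exact mul_le_mul_of_nonneg_right (le_ciSup hbdd i) (sq_nonneg _)
  calc x ⬝ᵥ A *ᵥ x = ∑ i, hA.eigenvalues i * (y i) ^ 2 := hq
    _ ≤ ∑ i, (⨆ j, hA.eigenvalues j) * (y i) ^ 2 := hsum
    _ = (⨆ j, hA.eigenvalues j) * (y ⬝ᵥ y) := by
        rw [← Finset.mul_sum]; simp [dotProduct, sq]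
    _ = (⨆ j, hA.eigenvalues j) * (x ⬝ᵥ x) := by rw [hnorm]

open Matrix in
lemma lapSpecRad_ge {V : Type*} [Fintype V] [DecidableEq V] [Nonempty V]
    (G : SimpleGraph V) [inst : DecidableRel G.Adj] (x : V → ℝ) :
    x ⬝ᵥ G.lapMatrix ℝ *ᵥ x ≤ lapSpecRad G * (x ⬝ᵥ x) := by
  unfold lapSpecRad
  rw [Subsingleton.elim inst (Classical.decRel G.Adj)]
  exact rayleigh_le_iSup _ x

/-- Parent function for the spider tree: hub `0`, children `1..10`, leaves `11..30`. -/
def pfn : Fin 31 → Fin 31 := fun v =>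
  if _ : v.val ≤ 10 then 0 else ⟨(v.val - 11) / 2 + 1, by omega⟩

/-- The spider tree: hub of degree 10, children of degree 3, 20 leaves. -/
def G31 : SimpleGraph (Fin 31) where
  Adj a b := a ≠ b ∧ (pfn a = b ∨ pfn b = a)
  symm := by
    refine ⟨fun a b h => ?_⟩
    exact ⟨fun e => h.1 e.symm, h.2.symm⟩
  loopless := ⟨fun a h => h.1 rfl⟩

instance : DecidableRel G31.Adj := fun a b =>
  inferInstanceAs (Decidable (a ≠ b ∧ (pfn a = b ∨ pfn b = a)))

lemma degree_indep {V : Type*} [fV : Fintype V] (G : SimpleGraph V) [h : DecidableRel G.Adj]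
    (v : V) (i : Fintype (G.neighborSet v)) :
    @SimpleGraph.degree V G v i
      = @SimpleGraph.degree V G v (@SimpleGraph.neighborSetFintype V G fV h v) := by
  congr 1
  exact Subsingleton.elim _ _

lemma neighborFinset_indep {V : Type*} [fV : Fintype V] (G : SimpleGraph V)
    [h : DecidableRel G.Adj] (v : V) (i : Fintype (G.neighborSet v)) :
    @SimpleGraph.neighborFinset V G v i
      = @SimpleGraph.neighborFinset V G v (@SimpleGraph.neighborSetFintype V G fV h v) := by
  congr 1
  exact Subsingleton.elim _ _

def dN : Fin 31 → ℕ := fun v => if v.val = 0 then 10 else if v.val ≤ 10 then 3 else 1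
def sN : Fin 31 → ℕ := fun v => if v.val = 0 then 30 else if v.val ≤ 10 then 12 else 3
def xi : Fin 31 → ℤ := fun v => if v.val = 0 then 9 else if v.val ≤ 10 then -1 else 0

lemma deg_eq : ∀ v : Fin 31, G31.degree v = dN v := by decide
lemma sum_eq : ∀ v : Fin 31, ∑ u ∈ G31.neighborFinset v, G31.degree u = sN v := by decide

lemma degR_eq (v : Fin 31) : degR G31 v = (dN v : ℝ) := by
  unfold degR
  simp only [degree_indep]
  rw [deg_eq v]

lemma avgDegR_eq (v : Fin 31) : avgDegR G31 v = (sN v : ℝ) / (dN v : ℝ) := by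
  unfold avgDegR
  simp only [degree_indep, neighborFinset_indep]
  rw [deg_eq v, ← Nat.cast_sum, sum_eq v]

lemma quad_eq : (∑ v : Fin 31, xi v * ((dN v : ℤ) * xi v - ∑ u ∈ G31.neighborFinset v, xi u))
    = 1020 := by decide

lemma norm_eq : (∑ v : Fin 31, xi v * xi v) = 91 := by decide

lemma hub_adj : ∀ v : Fin 31, v ≠ 0 → G31.Adj v (pfn v) := by decide
lemma pfn_pfn : ∀ v : Fin 31, pfn (pfn v) = 0 := by decide

lemma G31_connected : G31.Connected := by
  have hr : ∀ v : Fin 31, G31.Reachable v 0 := by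
    intro v
    by_cases h : v = 0
    · subst h; exact SimpleGraph.Reachable.refl 0
    · have h1 := (hub_adj v h).reachable
      by_cases h2 : pfn v = 0
      · exact h2 ▸ h1
      · exact h1.trans (pfn_pfn v ▸ (hub_adj (pfn v) h2).reachable)
  have hpre : G31.Preconnected := fun u v => (hr u).trans (hr v).symm
  exact ⟨hpre⟩

open Matrix in
lemma mu_ge : (1020 / 91 : ℝ) ≤ lapSpecRad G31 := by
  set x : Fin 31 → ℝ := fun v => ((xi v : ℤ) : ℝ) with hx
  have hq : x ⬝ᵥ G31.lapMatrix ℝ *ᵥ x = 1020 := by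
    have step : ∀ v : Fin 31, (G31.lapMatrix ℝ *ᵥ x) v
        = ((dN v : ℤ) : ℝ) * x v - ∑ u ∈ G31.neighborFinset v, x u := by
      intro v
      rw [SimpleGraph.lapMatrix_mulVec_apply, deg_eq v]
      push_cast
      ring
    have : x ⬝ᵥ G31.lapMatrix ℝ *ᵥ x
        = ((∑ v : Fin 31, xi v * ((dN v : ℤ) * xi v - ∑ u ∈ G31.neighborFinset v, xi u) : ℤ) : ℝ) := by
      rw [dotProduct]
      push_cast
      exact Finset.sum_congr rfl fun v _ => by rw [step v]; push_cast; ring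
    rw [this, quad_eq]
    norm_num
  have hn : x ⬝ᵥ x = 91 := by
    have : x ⬝ᵥ x = ((∑ v : Fin 31, xi v * xi v : ℤ) : ℝ) := by
      rw [dotProduct]; push_cast; rfl
    rw [this, norm_eq]; norm_num
  have h := lapSpecRad_ge G31 x
  rw [hq, hn] at h
  linarith

/-- There exists a finite simple connected graph `G` with at least two vertices whose
Laplacian spectral radius exceeds the conjectured vertex-maximum bound. -/
theorem exists_counterexample_bound15 :
    ∃ (V : Type) (_ : Fintype V) (_ : DecidableEq V) (_ : Nonempty V)
      (G : SimpleGraph V), G.Connected ∧ 2 ≤ Fintype.card V ∧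
      ∀ v : V, (fun d m => Real.sqrt (4 * m ^ 3 / d)) (degR G v) (avgDegR G v) < lapSpecRad G := by
  refine ⟨Fin 31, inferInstance, inferInstance, inferInstance, G31, G31_connected, by simp, ?_⟩
  intro v
  simp only
  have hc : (dN v = 10 ∧ sN v = 30) ∨ (dN v = 3 ∧ sN v = 12) ∨ (dN v = 1 ∧ sN v = 3) := by
    revert v; decide
  have hμ := mu_ge
  rw [degR_eq v, avgDegR_eq v]
  rcases hc with ⟨h1, h2⟩ | ⟨h1, h2⟩ | ⟨h1, h2⟩ <;>
    rw [h1, h2] <;>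
    refine lt_of_lt_of_le ?_ hμ <;>
    rw [Real.sqrt_lt' (by norm_num)] <;>
    norm_num
end
end

section
/- There exists a finite simple connected graph G with at least two vertices such that μ(G) > max over all vertices v of G of (4·m_v²)/(m_v + d_v). (This disproves conjectured vertex-maximum bound 31 of Brankov, Hansen and Stevanović.) -/
noncomputable section

open Finset Matrix

set_option maxRecDepth 2000

/-- The counterexample graph: a hub vertex `0` joined to four disjoint copies of `K₅`. -/
def hubG : SimpleGraph (Fin 21) where
  Adj i j := i ≠ j ∧ (i = 0 ∨ j = 0 ∨ (i.val - 1) / 5 = (j.val - 1) / 5)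
  symm := by
    constructor
    rintro i j ⟨h1, h2⟩
    exact ⟨h1.symm, by tauto⟩
  loopless := by constructor; rintro i ⟨h1, -⟩; exact h1 rfl

instance hubGDec : DecidableRel hubG.Adj := fun i j =>
  decidable_of_iff (i ≠ j ∧ (i = 0 ∨ j = 0 ∨ (i.val - 1) / 5 = (j.val - 1) / 5)) Iff.rfl

lemma hub_deg : ∀ v : Fin 21, hubG.degree v = if v = 0 then 20 else 5 := by decide

lemma hub_sumdeg : ∀ v : Fin 21,
    ∑ u ∈ hubG.neighborFinset v, hubG.degree u = if v = 0 then 100 else 40 := by decide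

lemma adj_hub : ∀ v : Fin 21, v ≠ 0 → hubG.Adj v 0 := by decide

/-- The eigenvector for eigenvalue 21. -/
def xv : Fin 21 → ℝ := fun i => if i = 0 then 20 else -1

lemma lap_mulVec : hubG.lapMatrix ℝ *ᵥ xv = (21 : ℝ) • xv := by
  funext v
  rw [SimpleGraph.lapMatrix_mulVec_apply]
  by_cases hv : v = 0
  · subst hv
    have hsum : ∑ u ∈ hubG.neighborFinset 0, xv u = -20 := by
      rw [Finset.sum_congr rfl (g := fun _ => (-1 : ℝ))
        (fun u hu => by
          have hne : u ≠ 0 := ((SimpleGraph.mem_neighborFinset _ _ _).1 hu).ne'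
          simp [xv, hne]),
        Finset.sum_const]
      have : (hubG.neighborFinset 0).card = 20 := by
        rw [SimpleGraph.card_neighborFinset_eq_degree, hub_deg 0]; rfl
      rw [this]; norm_num
    rw [hsum]
    have h20 : hubG.degree 0 = 20 := by rw [hub_deg 0]; rfl
    rw [h20]
    simp [xv]
    norm_num
  · have h5 : hubG.degree v = 5 := by simpa [hv] using hub_deg v
    have h0mem : (0 : Fin 21) ∈ hubG.neighborFinset v := by
      rw [SimpleGraph.mem_neighborFinset]
      exact adj_hub v hv
    have hsum : ∑ u ∈ hubG.neighborFinset v, xv u = 16 := by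
      rw [← Finset.add_sum_erase _ _ h0mem]
      have herase : ∑ u ∈ (hubG.neighborFinset v).erase 0, xv u = -4 := by
        rw [Finset.sum_congr rfl (g := fun _ => (-1 : ℝ))
          (fun u hu => by
            have hne : u ≠ 0 := Finset.ne_of_mem_erase hu
            simp [xv, hne]),
          Finset.sum_const]
        have : ((hubG.neighborFinset v).erase 0).card = 4 := by
          rw [Finset.card_erase_of_mem h0mem]
          rw [SimpleGraph.card_neighborFinset_eq_degree, h5]
        rw [this]; norm_num
      rw [herase]
      simp [xv]
      norm_num
    rw [hsum, h5]
    simp [xv, hv]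
    norm_num

lemma hasEig {n : Type} [Fintype n] [DecidableEq n] [Nonempty n] (A : Matrix n n ℝ) (μ : ℝ)
    (x : n → ℝ) (hx : x ≠ 0) (hAx : A *ᵥ x = μ • x) : μ ∈ spectrum ℝ A := by
  rw [spectrum.mem_iff, Matrix.isUnit_iff_isUnit_det]
  intro h
  apply h.ne_zero
  rw [← Matrix.exists_mulVec_eq_zero_iff]
  refine ⟨x, hx, ?_⟩
  rw [Matrix.sub_mulVec, hAx, Algebra.algebraMap_eq_smul_one, Matrix.smul_mulVec,
    Matrix.one_mulVec, sub_self]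

lemma xv_ne_zero : xv ≠ 0 := by
  intro h
  have := congrFun h 0
  simp [xv] at this

lemma le_lapSpecRad {V : Type} [Fintype V] [DecidableEq V] [Nonempty V] (G : SimpleGraph V)
    (μ : ℝ)
    (h : μ ∈ spectrum ℝ (letI := Classical.decRel G.Adj; G.lapMatrix ℝ)) :
    μ ≤ lapSpecRad G := by
  letI := Classical.decRel G.Adj
  unfold lapSpecRad
  rw [Matrix.IsHermitian.spectrum_real_eq_range_eigenvalues
    (SimpleGraph.posSemidef_lapMatrix ℝ G).isHermitian] at h
  obtain ⟨i, hi⟩ := h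
  exact hi ▸ le_ciSup (Set.Finite.bddAbove (Set.finite_range _)) i

/-- There exists a finite simple connected graph `G` with at least two vertices whose
Laplacian spectral radius exceeds the conjectured vertex-maximum bound. -/
theorem exists_counterexample_bound31 :
    ∃ (V : Type) (_ : Fintype V) (_ : DecidableEq V) (_ : Nonempty V)
      (G : SimpleGraph V), G.Connected ∧ 2 ≤ Fintype.card V ∧
      ∀ v : V, (fun d m => 4 * m ^ 2 / (m + d)) (degR G v) (avgDegR G v) < lapSpecRad G := by
  have hinst : Classical.decRel hubG.Adj = hubGDec := Subsingleton.elim _ _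
  refine ⟨Fin 21, inferInstance, inferInstance, inferInstance, hubG, ?_, by simp, ?_⟩
  · rw [SimpleGraph.connected_iff]
    refine ⟨fun u v => ?_, ⟨0⟩⟩
    have key : ∀ w : Fin 21, hubG.Reachable w 0 := fun w => by
      by_cases hw : w = 0
      · exact hw ▸ SimpleGraph.Reachable.refl _
      · exact (adj_hub w hw).reachable
    exact (key u).trans (key v).symm
  · intro v
    have h21 : (21 : ℝ) ≤ lapSpecRad hubG := by
      refine le_lapSpecRad hubG 21 ?_
      rw [hinst]
      exact hasEig _ 21 xv xv_ne_zero lap_mulVec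
    have hdegR : degR hubG v = if v = 0 then (20 : ℝ) else 5 := by
      unfold degR
      rw [hinst, hub_deg v]
      split <;> norm_num
    have havgR : avgDegR hubG v = if v = 0 then (5 : ℝ) else 8 := by
      unfold avgDegR
      rw [hinst]
      rw [← Nat.cast_sum, hub_sumdeg v, hub_deg v]
      split <;> norm_num
    rw [hdegR, havgR]
    by_cases hv : v = 0
    · rw [if_pos hv, if_pos hv]
      refine lt_of_lt_of_le (by norm_num) h21
    · rw [if_neg hv, if_neg hv]
      refine lt_of_lt_of_le (by norm_num) h21
end
end

section
/- There exists a finite simple connected graph G with at least two vertices such that μ(G) > max over all vertices v of G of √(m_v³·(m_v + 3·d_v))/d_v. (This disproves conjectured vertex-maximum bound 32 of Brankov, Hansen and Stevanović.) -/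
noncomputable section

open Finset

/-- Adjacency relation for the counterexample graph: hub `20` joined to a
6-regular circulant on `{0,…,19}`. -/
def hubAdj (i j : Fin 21) : Prop :=
  i ≠ j ∧ (i.val = 20 ∨ j.val = 20 ∨
    ((i.val + 20 - j.val) % 20 ≤ 3 ∨ 17 ≤ (i.val + 20 - j.val) % 20))

instance : DecidableRel hubAdj := fun i j => by unfold hubAdj; infer_instance

lemma hubAdj_symm : ∀ i j, hubAdj i j → hubAdj j i := by decide

lemma hubAdj_irrefl : ∀ i, ¬ hubAdj i i := by decide

def Gc : SimpleGraph (Fin 21) where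
  Adj := hubAdj
  symm := ⟨fun i j h => hubAdj_symm i j h⟩
  loopless := ⟨fun i h => hubAdj_irrefl i h⟩

instance GcDecAdj : DecidableRel Gc.Adj := fun i j => by
  show Decidable (hubAdj i j); infer_instance

@[simp] lemma Gc_adj (i j : Fin 21) : Gc.Adj i j ↔ hubAdj i j := Iff.rfl

lemma exists_eigenvalue_of_mulVec {n : Type*} [Fintype n] [DecidableEq n]
    {A : Matrix n n ℝ} (hA : A.IsHermitian) {x : n → ℝ} (hx : x ≠ 0) {c : ℝ}
    (h : Matrix.mulVec A x = c • x) : ∃ i, hA.eigenvalues i = c := by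
  set U : Matrix n n ℝ := (hA.eigenvectorUnitary : Matrix n n ℝ) with hU
  have hU1 : U * star U = 1 := (Matrix.mem_unitaryGroup_iff).mp hA.eigenvectorUnitary.2
  set y : n → ℝ := Matrix.mulVec (star U) x with hy
  have hyx : Matrix.mulVec U y = x := by
    rw [hy, Matrix.mulVec_mulVec, hU1, Matrix.one_mulVec]
  have hyne : y ≠ 0 := by
    intro h0
    apply hx
    rw [← hyx, h0, Matrix.mulVec_zero]
  have key : Matrix.mulVec (Matrix.diagonal (RCLike.ofReal ∘ hA.eigenvalues)) y = c • y := by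
    have hd := hA.conjStarAlgAut_star_eigenvectorUnitary
    simp only [Unitary.conjStarAlgAut_apply, star_star, Unitary.coe_star] at hd
    rw [← (show star U * A * U = _ from hd), ← Matrix.mulVec_mulVec, hyx,
      ← Matrix.mulVec_mulVec, h, Matrix.mulVec_smul]
  obtain ⟨i, hi⟩ := Function.ne_iff.mp hyne
  refine ⟨i, ?_⟩
  have := congrFun key i
  rw [Matrix.mulVec_diagonal] at this
  simp only [Function.comp_apply, RCLike.ofReal_real_eq_id, id_eq, Pi.smul_apply,
    smul_eq_mul] at this
  exact mul_right_cancel₀ (by simpa using hi) this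


/-- The eigenvector for eigenvalue `21`. -/
def xvec : Fin 21 → ℝ := fun v => if v.val = 20 then 20 else -1

lemma Gc_degree : ∀ v : Fin 21, Gc.degree v = if v.val = 20 then 20 else 7 := by decide

lemma Gc_degSum : ∀ v : Fin 21,
    ∑ u ∈ Gc.neighborFinset v, Gc.degree u = if v.val = 20 then 140 else 62 := by decide

set_option maxHeartbeats 1600000 in
lemma Gc_mulVec (inst : DecidableRel Gc.Adj) :
    Matrix.mulVec (@SimpleGraph.lapMatrix (Fin 21) ℝ _ Gc inst _ _) xvec = (21 : ℝ) • xvec := by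
  have e : @SimpleGraph.lapMatrix (Fin 21) ℝ _ Gc inst _ _
      = @SimpleGraph.lapMatrix (Fin 21) ℝ _ Gc GcDecAdj _ _ := by congr!
  rw [e]
  funext v
  rw [@SimpleGraph.lapMatrix_mulVec_apply (Fin 21) ℝ _ Gc GcDecAdj _ _ v xvec,
    @SimpleGraph.neighborFinset_eq_filter (Fin 21) Gc _ v GcDecAdj,
    Finset.sum_filter, Gc_degree v]
  fin_cases v <;>
    norm_num [Finset.sum_fin_eq_sum_range, Finset.sum_range_succ, xvec, Gc_adj, hubAdj, Fin.ext_iff]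

lemma le_lapSpecRad_s7 {V : Type} [Fintype V] [DecidableEq V] [Nonempty V] (G : SimpleGraph V)
    {x : V → ℝ} (hx : x ≠ 0) {c : ℝ}
    (h : ∀ (inst : DecidableRel G.Adj),
      Matrix.mulVec (@SimpleGraph.lapMatrix V ℝ _ G inst _ _) x = c • x) :
    c ≤ lapSpecRad G := by
  letI := Classical.decRel G.Adj
  unfold lapSpecRad
  obtain ⟨i, hi⟩ := exists_eigenvalue_of_mulVec
    (SimpleGraph.posSemidef_lapMatrix ℝ G).isHermitian hx (h _)
  rw [← hi]
  exact le_ciSup (Set.finite_range _).bddAbove i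

set_option maxHeartbeats 1600000 in
/-- There exists a finite simple connected graph `G` with at least two vertices whose
Laplacian spectral radius exceeds the conjectured vertex-maximum bound. -/
theorem exists_counterexample_bound32 :
    ∃ (V : Type) (_ : Fintype V) (_ : DecidableEq V) (_ : Nonempty V)
      (G : SimpleGraph V), G.Connected ∧ 2 ≤ Fintype.card V ∧
      ∀ v : V, (fun d m => Real.sqrt (m ^ 3 * (m + 3 * d)) / d) (degR G v) (avgDegR G v) < lapSpecRad G := by
  refine ⟨Fin 21, inferInstance, inferInstance, inferInstance, Gc, ?_, by simp, ?_⟩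
  · -- connectivity
    have hadj : ∀ v : Fin 21, v ≠ 20 → Gc.Adj v 20 := by decide
    rw [SimpleGraph.connected_iff]
    refine ⟨?_, ⟨0⟩⟩
    have hreach : ∀ w : Fin 21, Gc.Reachable w 20 := by
      intro w
      by_cases hw : w = 20
      · rw [hw]
      · exact (hadj w hw).reachable
    intro u v
    exact (hreach u).trans (hreach v).symm
  · -- the spectral bound
    have hxne : xvec ≠ 0 := by
      intro h
      have h2 := congrFun h (20 : Fin 21)
      have h3 : xvec (20 : Fin 21) = 20 := if_pos rfl
      rw [h3, Pi.zero_apply] at h2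
      norm_num at h2
    have hlap : (21 : ℝ) ≤ lapSpecRad Gc := le_lapSpecRad_s7 Gc hxne Gc_mulVec
    intro v
    have hdR : degR Gc v = ((Gc.degree v : ℕ) : ℝ) := by
      unfold degR; congr!
    have haR : avgDegR Gc v
        = (((∑ u ∈ Gc.neighborFinset v, Gc.degree u : ℕ) : ℝ)) / ((Gc.degree v : ℕ) : ℝ) := by
      unfold avgDegR
      rw [Nat.cast_sum]
      congr!
    refine lt_of_lt_of_le ?_ hlap
    simp only [hdR, haR, Gc_degree v, Gc_degSum v]
    by_cases hv : v.val = 20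
    · rw [if_pos hv, if_pos hv]
      rw [div_lt_iff₀ (by norm_num : (0:ℝ) < ((20:ℕ):ℝ))]
      rw [Real.sqrt_lt' (by norm_num)]
      norm_num
    · rw [if_neg hv, if_neg hv]
      rw [div_lt_iff₀ (by norm_num : (0:ℝ) < ((7:ℕ):ℝ))]
      rw [Real.sqrt_lt' (by norm_num)]
      norm_num
end
end
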